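/- arXiv:2406.00398 — 3 statements merged into one kernel-verified Lean document; each statement's English description precedes it below -/
import Mathlib

section
/- Let H : ℂⁿ → ℝ be Fréchet differentiable (over ℝ) and phase invariant, and let ∇H denote its gradient with respect to the real inner product ⟨z,w⟩ = Re(Σ_k conj(z_k) w_k) on ℂⁿ. If b : ℝ → ℂⁿ is differentiable and satisfies the Hamiltonian equations ḃ(t) = −i·∇H(b(t)) (equivalently ḃ_k = −2i ∂H/∂conj(b_k)) for all t, then the total mass M(t) = ‖b(t)‖² = Σ_k |b_k(t)|² is constant in t, i.e. M is a first integral of the motion. -/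
open scoped ComplexInnerProductSpace in
/-- For a phase-invariant differentiable Hamiltonian `H` on `ℂⁿ`,
solutions of `ḃ = −i·∇H(b)` (gradient w.r.t. the real inner product
`⟨z,w⟩ = Re Σ conj(z_k) w_k`) conserve the total mass `M = ‖b‖²`. -/
theorem mass_is_first_integral
    (n : ℕ) (H : EuclideanSpace ℂ (Fin n) → ℝ)
    (hH : Differentiable ℝ H)
    (hinv : ∀ (θ : ℝ) (b : EuclideanSpace ℂ (Fin n)),
      H (Complex.exp (θ * Complex.I) • b) = H b)
    (grad : EuclideanSpace ℂ (Fin n) → EuclideanSpace ℂ (Fin n))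
    (hgrad : ∀ (b h : EuclideanSpace ℂ (Fin n)),
      fderiv ℝ H b h = (inner ℂ (grad b) h : ℂ).re)
    (b : ℝ → EuclideanSpace ℂ (Fin n))
    (hb : Differentiable ℝ b)
    (heq : ∀ t : ℝ, deriv b t = (-Complex.I) • grad (b t)) :
    ∀ t s : ℝ, ‖b t‖ ^ 2 = ‖b s‖ ^ 2 := by
  -- Key: phase invariance implies Re⟪grad z, I • z⟫ = 0.
  have key : ∀ z : EuclideanSpace ℂ (Fin n),
      (⟪grad z, Complex.I • z⟫).re = 0 := by
    intro z
    -- the curve θ ↦ exp(θ I) • z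
    have hc : HasDerivAt (fun θ : ℝ => Complex.exp (θ * Complex.I))
        (Complex.exp ((0 : ℝ) * Complex.I) * Complex.I) 0 := by
      have h1 : HasDerivAt (fun θ : ℝ => (θ : ℂ) * Complex.I) Complex.I 0 := by
        simpa using (Complex.ofRealCLM.hasDerivAt (x := (0 : ℝ))).mul_const Complex.I
      simpa using h1.cexp
    have hcurve : HasDerivAt (fun θ : ℝ => Complex.exp (θ * Complex.I) • z)
        (Complex.I • z) 0 := by
      have := hc.smul_const z
      simpa using this
    have hcomp : HasDerivAt (fun θ : ℝ => H (Complex.exp (θ * Complex.I) • z))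
        (fderiv ℝ H z (Complex.I • z)) 0 := by
      have h0 : Complex.exp ((0 : ℝ) * Complex.I) • z = z := by simp
      have := ((hH _).hasFDerivAt).comp_hasDerivAt 0 hcurve
      rwa [h0] at this
    have hconst : (fun θ : ℝ => H (Complex.exp (θ * Complex.I) • z)) = fun _ => H z := by
      funext θ; exact hinv θ z
    rw [hconst] at hcomp
    have : fderiv ℝ H z (Complex.I • z) = 0 := by
      have h0 : HasDerivAt (fun _ : ℝ => H z) 0 0 := hasDerivAt_const 0 (H z)
      exact hcomp.unique h0
    rw [hgrad] at this
    exact this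
  -- derivative of the mass
  have hM : ∀ t : ℝ, HasDerivAt (fun s => ‖b s‖ ^ 2) 0 t := by
    intro t
    have hbd : HasDerivAt b ((-Complex.I) • grad (b t)) t := by
      have := (hb t).hasDerivAt
      rwa [heq t] at this
    have hI : HasDerivAt (fun s => (⟪b s, b s⟫ : ℂ))
        (⟪b t, (-Complex.I) • grad (b t)⟫ + ⟪(-Complex.I) • grad (b t), b t⟫) t :=
      hbd.inner ℂ hbd
    have hre : HasDerivAt (fun s => (⟪b s, b s⟫ : ℂ).re)
        ((⟪b t, (-Complex.I) • grad (b t)⟫ + ⟪(-Complex.I) • grad (b t), b t⟫).re) t :=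
      (Complex.reCLM.hasFDerivAt.comp_hasDerivAt t hI)
    have hval : (⟪b t, (-Complex.I) • grad (b t)⟫ + ⟪(-Complex.I) • grad (b t), b t⟫).re = 0 := by
      have h1 := key (b t)
      have e1 : (⟪b t, (-Complex.I) • grad (b t)⟫ : ℂ)
          = -(Complex.I * ⟪b t, grad (b t)⟫) := by
        rw [inner_smul_right]; ring
      have e2 : (⟪(-Complex.I) • grad (b t), b t⟫ : ℂ)
          = Complex.I * ⟪grad (b t), b t⟫ := by
        rw [inner_smul_left]
        simp [Complex.conj_I]
      have e3 : (⟪grad (b t), Complex.I • b t⟫ : ℂ)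
          = Complex.I * ⟪grad (b t), b t⟫ := by
        rw [inner_smul_right]
      have h2 : (⟪grad (b t), b t⟫ : ℂ) = starRingEnd ℂ ⟪b t, grad (b t)⟫ :=
        (inner_conj_symm (𝕜 := ℂ) (grad (b t)) (b t)).symm
      rw [e1, e2]
      rw [e3] at h1
      set w : ℂ := ⟪b t, grad (b t)⟫ with hw
      rw [h2] at h1 ⊢
      simp only [Complex.add_re, Complex.neg_re, Complex.mul_re, Complex.I_re,
        Complex.I_im, Complex.conj_re, Complex.conj_im] at h1 ⊢
      linarith
    rw [hval] at hre
    have hfun : (fun s => (⟪b s, b s⟫ : ℂ).re) = fun s => ‖b s‖ ^ 2 := by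
      funext s; exact inner_self_eq_norm_sq (𝕜 := ℂ) (b s)
    rwa [hfun] at hre
  intro t s
  exact is_const_of_deriv_eq_zero (fun x => (hM x).differentiableAt)
    (fun x => (hM x).deriv) t s
end

section
/- Let α ∈ ℝ and a ∈ ℂ with |a| > |α|, set λ = √(|a|² − α²) > 0, and let ω ∈ ℂ satisfy ω² = i·conj(a)/(λ + iα). Then |ω| = 1 and −i(αω − conj(a)·conj(ω)) = λω; i.e. ω is an eigenvector of the ℝ-linear map L : ℂ → ℂ, L(c) = −i(αc − conj(a)·conj(c)), with eigenvalue λ. -/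
/-- If `|a| > |α|`, `λ = √(|a|² − α²)` and `ω² = i·conj(a)/(λ + iα)`,
then `|ω| = 1` and `−i(αω − conj(a)·conj(ω)) = λω`, i.e. `ω` is an eigenvector of the
ℝ-linear map `L(c) = −i(αc − conj(a)·conj(c))` with eigenvalue `λ`. -/
theorem omega_is_unstable_eigenvector (α : ℝ) (a : ℂ)
    (h : ‖a‖ > |α|)
    (lam : ℝ) (hlam : lam = Real.sqrt (‖a‖ ^ 2 - α ^ 2))
    (ω : ℂ) (hω : ω ^ 2 = Complex.I * (starRingEnd ℂ) a / (lam + α * Complex.I)) :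
    ‖ω‖ = 1 ∧
    -Complex.I * (α * ω - (starRingEnd ℂ) a * (starRingEnd ℂ) ω) = lam * ω := by
  have ha : (0:ℝ) < ‖a‖ := lt_of_le_of_lt (abs_nonneg α) h
  have hsq : α ^ 2 < ‖a‖ ^ 2 := by
    nlinarith [sq_abs α, le_abs_self α, neg_abs_le α, abs_nonneg α]
  have hlam2 : lam ^ 2 = ‖a‖ ^ 2 - α ^ 2 := by
    rw [hlam]; exact Real.sq_sqrt (by linarith)
  have hlampos : 0 < lam := by
    rw [hlam]; exact Real.sqrt_pos.mpr (by linarith)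
  have habsd : ‖(lam:ℂ) + α * Complex.I‖ = ‖a‖ := by
    have h1 : ‖(lam:ℂ) + α * Complex.I‖ ^ 2 = ‖a‖ ^ 2 := by
      rw [Complex.sq_norm, Complex.normSq_apply]
      simp
      nlinarith
    nlinarith [norm_nonneg ((lam:ℂ) + α * Complex.I), norm_nonneg a]
  have hdne : ((lam:ℂ) + α * Complex.I) ≠ 0 := by
    intro h0; rw [h0] at habsd; simp at habsd; linarith
  have habsω : ‖ω‖ = 1 := by
    have h2 : ‖ω ^ 2‖ = 1 := by
      rw [hω, norm_div, norm_mul, habsd]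
      simp [ha.ne']
    rw [norm_pow] at h2
    nlinarith [norm_nonneg ω]
  refine ⟨habsω, ?_⟩
  have hωne : ω ≠ 0 := by intro h0; rw [h0] at habsω; simp at habsω
  have hconj : (starRingEnd ℂ) ω = ω⁻¹ := by
    rw [Complex.inv_def, Complex.normSq_eq_norm_sq, habsω]; simp
  have habar : (starRingEnd ℂ) a = -Complex.I * ω ^ 2 * ((lam:ℂ) + α * Complex.I) := by
    rw [eq_div_iff hdne] at hω
    linear_combination Complex.I * hω + (starRingEnd ℂ) a * Complex.I_sq
  rw [hconj, habar]
  field_simp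
  linear_combination (-(lam:ℂ) - Complex.I * (α:ℂ)) * Complex.I_sq
end

section
/- Let H : ℝ² × ℝ² → ℝ be twice continuously differentiable, let J be the real 2×2 matrix [[0, −1], [−1, 0]], and define the Hamiltonian component vector fields g₋(z₋, z₊) = J·∇_{z₋}H(z₋, z₊) and g₊(z₋, z₊) = J·∇_{z₊}H(z₋, z₊). Suppose the plane {z₊ = 0} is invariant, i.e. g₊(z₋, 0) = 0 for all z₋ ∈ ℝ². Then for every z₋ ∈ ℝ² the partial derivative of g₋ with respect to z₊ vanishes at (z₋, 0): D_{z₊}g₋(z₋, 0) = 0. (Thus for Hamiltonian systems, invariance of the coordinate plane automatically yields the block diagonal structure of the variational equations along orbits contained in {z₊ = 0}.) -/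
open ContinuousLinearMap

local notation "E2" => EuclideanSpace ℝ (Fin 2)

/-- For a C² Hamiltonian `H : ℝ² × ℝ² → ℝ`, with `J = [[0,−1],[−1,0]]`
and Hamiltonian component fields `g₋ = J∇_{z₋}H`, `g₊ = J∇_{z₊}H`, if the plane
`{z₊ = 0}` is invariant (`g₊(z₋, 0) = 0` for all `z₋`), then the Jacobian block
`D_{z₊}g₋` vanishes at every point `(z₋, 0)`. -/
theorem hamiltonian_block_diagonal_structure
    (H : EuclideanSpace ℝ (Fin 2) × EuclideanSpace ℝ (Fin 2) → ℝ)
    (hH : ContDiff ℝ 2 H)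
    (J : Matrix (Fin 2) (Fin 2) ℝ) (hJ : J = !![0, -1; -1, 0])
    (gm gp : EuclideanSpace ℝ (Fin 2) × EuclideanSpace ℝ (Fin 2) → EuclideanSpace ℝ (Fin 2))
    (hgm : ∀ p, gm p
      = (EuclideanSpace.equiv (Fin 2) ℝ).symm
          (J.mulVec (EuclideanSpace.equiv (Fin 2) ℝ
            (gradient (fun w => H (w, p.2)) p.1))))
    (hgp : ∀ p, gp p
      = (EuclideanSpace.equiv (Fin 2) ℝ).symm
          (J.mulVec (EuclideanSpace.equiv (Fin 2) ℝ
            (gradient (fun w => H (p.1, w)) p.2))))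
    (hinv : ∀ zm : EuclideanSpace ℝ (Fin 2), gp (zm, 0) = 0) :
    ∀ zm : EuclideanSpace ℝ (Fin 2),
      fderiv ℝ (fun w => gm (zm, w)) 0 = 0 := by
  intro zm
  -- J is injective on vectors
  have hJinj : ∀ v : Fin 2 → ℝ, J.mulVec v = 0 → v = 0 := by
    subst hJ
    intro v hv
    have h0 := congrFun hv 0
    have h1 := congrFun hv 1
    simp [Matrix.mulVec, dotProduct, Fin.sum_univ_two] at h0 h1
    funext i
    fin_cases i <;> simp [h0, h1]
  have hHdiff : Differentiable ℝ H := hH.differentiable (by norm_num)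
  have hH'diff : Differentiable ℝ (fderiv ℝ H) :=
    (hH.fderiv_right (m := 1) (by norm_num)).differentiable one_ne_zero
  -- partial derivative formulas
  have P1 : ∀ (z : E2) (w : E2), fderiv ℝ (fun u => H (u, w)) z
      = (fderiv ℝ H (z, w)).comp (inl ℝ E2 E2) := fun z w =>
    ((hHdiff (z, w)).hasFDerivAt.comp z (hasFDerivAt_prodMk_left z w)).fderiv
  have P2 : ∀ (z : E2) (w : E2), fderiv ℝ (fun w' => H (z, w')) w
      = (fderiv ℝ H (z, w)).comp (inr ℝ E2 E2) := fun z w =>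
    ((hHdiff (z, w)).hasFDerivAt.comp w (hasFDerivAt_prodMk_right z w)).fderiv
  -- invariance forces vanishing of the z₊-partial of H on the plane
  have step1 : ∀ z : E2, (fderiv ℝ H (z, 0)).comp (inr ℝ E2 E2) = 0 := by
    intro z
    have h := hinv z
    rw [hgp] at h
    simp only at h
    have h2 : J.mulVec ((EuclideanSpace.equiv (Fin 2) ℝ)
        (gradient (fun w => H (z, w)) (0 : E2))) = 0 := by
      have := congrArg (EuclideanSpace.equiv (Fin 2) ℝ) h
      simpa using this
    have h3 := hJinj _ h2
    have h4 : gradient (fun w => H (z, w)) (0 : E2) = 0 := by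
      have := congrArg (EuclideanSpace.equiv (Fin 2) ℝ).symm h3
      simpa using this
    have h5 : fderiv ℝ (fun w => H (z, w)) (0 : E2) = 0 := by
      unfold gradient at h4
      have := congrArg (InnerProductSpace.toDual ℝ E2) h4
      simpa using this
    rw [← P2]; exact h5
  set D := fderiv ℝ (fderiv ℝ H) with hD
  -- mixed partial vanishes: D (zm,0) (u,0) (0,v) = 0
  have claimA : ∀ (u v : E2), D (zm, 0) (u, 0) ((0 : E2), v) = 0 := by
    intro u v
    have hzero : (fun z : E2 => fderiv ℝ H (z, 0) ((0 : E2), v)) = fun _ => (0 : ℝ) := by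
      funext z
      have := congrFun (congrArg DFunLike.coe (step1 z)) v
      simpa using this
    have hder : HasFDerivAt (fun z : E2 => fderiv ℝ H (z, 0) ((0 : E2), v))
        ((ContinuousLinearMap.apply ℝ ℝ ((0 : E2), v)).comp
          ((D (zm, 0)).comp (inl ℝ E2 E2))) zm := by
      have h1 : HasFDerivAt (fun z : E2 => fderiv ℝ H (z, 0))
          ((D (zm, 0)).comp (inl ℝ E2 E2)) zm :=
        ((hH'diff (zm, 0)).hasFDerivAt).comp zm (hasFDerivAt_prodMk_left zm 0)
      exact ((ContinuousLinearMap.apply ℝ ℝ ((0 : E2), v)).hasFDerivAt).comp zm h1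
    have hz : fderiv ℝ (fun z : E2 => fderiv ℝ H (z, 0) ((0 : E2), v)) zm = 0 := by
      rw [hzero]; exact fderiv_const_apply 0
    rw [hder.fderiv] at hz
    have := congrFun (congrArg DFunLike.coe hz) u
    simpa using this
  -- symmetry of the second derivative
  have hsymm : IsSymmSndFDerivAt ℝ H (zm, 0) :=
    hH.contDiffAt.isSymmSndFDerivAt (by norm_num)
  have claimB : ∀ (u v : E2), D (zm, 0) ((0 : E2), v) (u, 0) = 0 := by
    intro u v
    have h := claimA u v
    rwa [hsymm (u, 0) ((0 : E2), v)] at h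
  have claimB' : ∀ v : E2, (D (zm, 0) ((0 : E2), v)).comp (inl ℝ E2 E2) = 0 := by
    intro v
    ext u
    simpa using claimB u v
  -- the continuous linear map sending L : (E2 × E2 →L ℝ) to J·∇-vector of L∘inl
  let A₁ : ((E2 × E2) →L[ℝ] ℝ) →L[ℝ] (E2 →L[ℝ] ℝ) :=
    (ContinuousLinearMap.compL ℝ E2 (E2 × E2) ℝ).flip (inl ℝ E2 E2)
  let A₂l : (E2 →L[ℝ] ℝ) →ₗ[ℝ] E2 :=
    { toFun := fun L => (InnerProductSpace.toDual ℝ E2).symm L,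
      map_add' := fun x y => map_add _ x y,
      map_smul' := fun c x => by
        simpa using (InnerProductSpace.toDual ℝ E2).symm.map_smulₛₗ c x }
  let A₂ : (E2 →L[ℝ] ℝ) →L[ℝ] E2 := LinearMap.toContinuousLinearMap A₂l
  let A₃ : E2 →L[ℝ] (Fin 2 → ℝ) := (EuclideanSpace.equiv (Fin 2) ℝ : E2 ≃L[ℝ] _)
  let A₄ : (Fin 2 → ℝ) →L[ℝ] (Fin 2 → ℝ) := LinearMap.toContinuousLinearMap J.mulVecLin
  let A₅ : (Fin 2 → ℝ) →L[ℝ] E2 := ((EuclideanSpace.equiv (Fin 2) ℝ).symm : _ ≃L[ℝ] E2)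
  let T : ((E2 × E2) →L[ℝ] ℝ) →L[ℝ] E2 := A₅ ∘L A₄ ∘L A₃ ∘L A₂ ∘L A₁
  have hgmT : ∀ w : E2, gm (zm, w) = T (fderiv ℝ H (zm, w)) := by
    intro w
    rw [hgm]
    have hg : gradient (fun u => H (u, w)) zm
        = (InnerProductSpace.toDual ℝ E2).symm ((fderiv ℝ H (zm, w)).comp (inl ℝ E2 E2)) := by
      unfold gradient
      rw [P1]
    simp only [hg]
    simp only [T, A₁, A₂, A₂l, A₃, A₄, A₅, ContinuousLinearMap.comp_apply,
      ContinuousLinearMap.flip_apply, ContinuousLinearMap.compL_apply,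
      ContinuousLinearEquiv.coe_coe, LinearMap.coe_toContinuousLinearMap',
      Matrix.mulVecLin_apply, LinearMap.coe_mk, AddHom.coe_mk]
  have hinner : HasFDerivAt (fun w : E2 => fderiv ℝ H (zm, w))
      ((D (zm, 0)).comp (inr ℝ E2 E2)) 0 :=
    ((hH'diff (zm, 0)).hasFDerivAt).comp 0 (hasFDerivAt_prodMk_right zm 0)
  have hmain : HasFDerivAt (fun w : E2 => gm (zm, w))
      (T.comp ((D (zm, 0)).comp (inr ℝ E2 E2))) 0 := by
    have := (T.hasFDerivAt.comp 0 hinner)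
    simp only [hgmT]; exact this
  rw [hmain.fderiv]
  ext v i
  have hA1 : A₁ (D (zm, 0) ((0 : E2), v)) = 0 := by
    simpa [A₁] using claimB' v
  simp [T, ContinuousLinearMap.comp_apply, hA1]
end
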